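/- Let y₁, …, y_n ∈ M be distinct points and k₁, …, k_n positive integers with k₁ + ⋯ + k_n = d, and set 𝔪_Y = (𝔪_{y₁})^{k₁} ∩ ⋯ ∩ (𝔪_{y_n})^{k_n}. Let F be a finite-dimensional linear subspace of R = C^∞(M,ℝ) with F + 𝔪_Y = R, and let L ⊆ F be a linear subspace of codimension d in F. Then there exists an ideal I of R with dim_ℝ(R/I) = d, 𝔪_Y ⊆ I and L = F ∩ I if and only if both (1) F ∩ 𝔪_Y ⊆ L, and (2) for all p ∈ F and g ∈ L, the product p·g lies in 𝔪_Y + L. In that case 𝔪_Y + L is an ideal of R and I = 𝔪_Y + L. -/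

import Mathlib

open scoped Manifold
open Module Filter Topology

noncomputable section

/-- The ℝ-algebra of smooth real-valued functions on a manifold `M` modelled on `ℝ^m`. -/
abbrev SmoothFns (m : ℕ) (M : Type*) [TopologicalSpace M]
    [ChartedSpace (EuclideanSpace ℝ (Fin m)) M] : Type _ :=
  C^(⊤ : ℕ∞)⟮𝓡 m, M; 𝓘(ℝ, ℝ), ℝ⟯

variable {m : ℕ} {M : Type*} [TopologicalSpace M] [T2Space M] [SecondCountableTopology M]
  [ChartedSpace (EuclideanSpace ℝ (Fin m)) M] [IsManifold (𝓡 m) (⊤ : ℕ∞) M]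

/-- The ideal `𝔪ₓ` of smooth functions vanishing at the point `x`. -/
def mIdeal (x : M) : Ideal (SmoothFns m M) where
  carrier := {f | f x = 0}
  add_mem' := by intro f g hf hg; simp_all
  zero_mem' := by simp
  smul_mem' := by intro c f hf; simp_all

/-- The ideal `𝔫ₓ` of smooth functions vanishing on some neighbourhood of the point `x`. -/
def nIdeal (x : M) : Ideal (SmoothFns m M) where
  carrier := {f | ∀ᶠ y in 𝓝 x, f y = 0}
  add_mem' := by
    intro f g hf hg
    filter_upwards [hf, hg] with y h1 h2
    simp [h1, h2]
  zero_mem' := by filter_upwards with y; simp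
  smul_mem' := by
    intro c f hf
    filter_upwards [hf] with y h
    simp [h]

/-- The spectrum of an ideal: the set of common zeros of its elements. -/
def idealSpec (I : Ideal (SmoothFns m M)) : Set M :=
  {x : M | ∀ f ∈ I, f x = 0}

/-- The ideal `𝔪_Y = (𝔪_{y 1})^{k 1} ∩ ⋯ ∩ (𝔪_{y n})^{k n}` associated to points with
weights. -/
def mYIdeal (n : ℕ) (y : Fin n → M) (k : Fin n → ℕ) : Ideal (SmoothFns m M) :=
  ⨅ i, (mIdeal (y i)) ^ (k i)


open Module

theorem aux_inf {K V : Type*} [Field K] [AddCommGroup V] [Module K V]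
    (F W L : Submodule K V) (hL : L ≤ F) (h1 : F ⊓ W ≤ L) :
    F ⊓ (W ⊔ L) = L := by
  apply le_antisymm
  · rintro x hx
    rw [Submodule.mem_inf] at hx
    obtain ⟨hxF, hxWL⟩ := hx
    obtain ⟨w, hw, l, hl, rfl⟩ := Submodule.mem_sup.mp hxWL
    have hwF : w ∈ F := by
      have := F.sub_mem hxF (hL hl)
      simpa using this
    exact L.add_mem (h1 (Submodule.mem_inf.mpr ⟨hwF, hw⟩)) hl
  · exact le_inf hL le_sup_right

theorem aux_comap {K V : Type*} [Field K] [AddCommGroup V] [Module K V]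
    (F W L : Submodule K V) (hinf : F ⊓ W = L) :
    W.comap F.subtype = L.comap F.subtype := by
  ext ⟨x, hx⟩
  simp only [Submodule.mem_comap, Submodule.subtype_apply]
  constructor
  · intro h; rw [← hinf]; exact Submodule.mem_inf.mpr ⟨hx, h⟩
  · intro h; rw [← hinf] at h; exact (Submodule.mem_inf.mp h).2

noncomputable def aux_equiv {K V : Type*} [Field K] [AddCommGroup V] [Module K V]
    (F J L : Submodule K V) (hFJ : F ⊔ J = ⊤)
    (hcomap : J.comap F.subtype = L.comap F.subtype) :
    (V ⧸ J) ≃ₗ[K] (F ⧸ L.comap F.subtype) := by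
  have hsurj : Function.Surjective (J.mkQ.comp F.subtype) := by
    intro x
    obtain ⟨v, rfl⟩ := Submodule.Quotient.mk_surjective J x
    have hv : v ∈ F ⊔ J := hFJ.symm ▸ Submodule.mem_top
    obtain ⟨f, hf, j, hj, hx⟩ := Submodule.mem_sup.mp hv
    refine ⟨⟨f, hf⟩, ?_⟩
    simp only [LinearMap.comp_apply, Submodule.subtype_apply, Submodule.mkQ_apply]
    rw [Submodule.Quotient.eq]
    have : f - v = -j := by rw [← hx]; abel
    rw [this]; exact J.neg_mem hj
  have hker : LinearMap.ker (J.mkQ.comp F.subtype) = L.comap F.subtype := by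
    rw [LinearMap.ker_comp, Submodule.ker_mkQ, hcomap]
  exact ((Submodule.quotEquivOfEq _ _ hker).symm.trans
    ((J.mkQ.comp F.subtype).quotKerEquivOfSurjective hsurj)).symm

set_option maxHeartbeats 1000000 in
/-- Characterization of the subspaces `L = F ∩ I` for ideals `I` of
codimension `d` containing `𝔪_Y`: such an `I` exists iff `F ∩ 𝔪_Y ⊆ L` and
`F·L ⊆ 𝔪_Y + L`; in that case `𝔪_Y + L` is an ideal and `I = 𝔪_Y + L`. -/
theorem exists_ideal_with_trace_iff
    (n d : ℕ) (y : Fin n → M) (hy : Function.Injective y)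
    (k : Fin n → ℕ) (hk : ∀ i, 0 < k i) (hsum : ∑ i, k i = d)
    (F : Submodule ℝ (SmoothFns m M)) (hFfd : FiniteDimensional ℝ F)
    (hF : F ⊔ (mYIdeal n y k).restrictScalars ℝ = ⊤)
    (L : Submodule ℝ (SmoothFns m M)) (hL : L ≤ F)
    (hLcodim : Module.finrank ℝ (F ⧸ (L.comap F.subtype)) = d) :
    ((∃ I : Ideal (SmoothFns m M), FiniteDimensional ℝ (SmoothFns m M ⧸ I) ∧
        Module.finrank ℝ (SmoothFns m M ⧸ I) = d ∧ mYIdeal n y k ≤ I ∧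
        L = F ⊓ I.restrictScalars ℝ) ↔
      (F ⊓ (mYIdeal n y k).restrictScalars ℝ ≤ L ∧
        ∀ p ∈ F, ∀ g ∈ L, p * g ∈ (mYIdeal n y k).restrictScalars ℝ ⊔ L)) ∧
    ((F ⊓ (mYIdeal n y k).restrictScalars ℝ ≤ L ∧
        ∀ p ∈ F, ∀ g ∈ L, p * g ∈ (mYIdeal n y k).restrictScalars ℝ ⊔ L) →
      ∃ I : Ideal (SmoothFns m M),
        I.restrictScalars ℝ = (mYIdeal n y k).restrictScalars ℝ ⊔ L ∧
        FiniteDimensional ℝ (SmoothFns m M ⧸ I) ∧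
        Module.finrank ℝ (SmoothFns m M ⧸ I) = d ∧ mYIdeal n y k ≤ I ∧
        L = F ⊓ I.restrictScalars ℝ) := by
  classical
  set R := SmoothFns m M
  set W : Submodule ℝ R := (mYIdeal n y k).restrictScalars ℝ with hWdef
  -- the strong construction direction
  have key : (F ⊓ W ≤ L ∧ ∀ p ∈ F, ∀ g ∈ L, p * g ∈ W ⊔ L) →
      ∃ I : Ideal R,
        I.restrictScalars ℝ = W ⊔ L ∧
        FiniteDimensional ℝ (R ⧸ I) ∧
        Module.finrank ℝ (R ⧸ I) = d ∧ mYIdeal n y k ≤ I ∧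
        L = F ⊓ I.restrictScalars ℝ := by
    rintro ⟨h1, h2⟩
    have hsmul : ∀ (f : R), ∀ g ∈ W ⊔ L, f * g ∈ W ⊔ L := by
      intro f g hg
      have hf : f ∈ F ⊔ W := hF.symm ▸ Submodule.mem_top
      obtain ⟨p, hp, h, hh, rfl⟩ := Submodule.mem_sup.mp hf
      obtain ⟨w, hw, l, hl, rfl⟩ := Submodule.mem_sup.mp hg
      have e : (p + h) * (w + l) = (p * w + h * (w + l)) + p * l := by ring
      rw [e]
      refine Submodule.add_mem _ (Submodule.add_mem _ ?_ ?_) (h2 p hp l hl)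
      · have hpw : p * w ∈ mYIdeal n y k := (mYIdeal n y k).mul_mem_left p hw
        exact Submodule.mem_sup_left hpw
      · have hhw : h * (w + l) ∈ mYIdeal n y k := (mYIdeal n y k).mul_mem_right (w + l) hh
        exact Submodule.mem_sup_left hhw
    let I : Ideal R :=
      { carrier := (W ⊔ L : Submodule ℝ R)
        add_mem' := fun ha hb => (W ⊔ L).add_mem ha hb
        zero_mem' := (W ⊔ L).zero_mem
        smul_mem' := fun f g hg => by simpa [smul_eq_mul] using hsmul f g hg }
    have hIres : I.restrictScalars ℝ = W ⊔ L := by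
      ext x; exact Iff.rfl
    have hFJ : F ⊔ (W ⊔ L) = ⊤ := by rw [← sup_assoc, hF, top_sup_eq]
    have hinf : F ⊓ (W ⊔ L) = L := aux_inf F W L hL h1
    have e : (R ⧸ (W ⊔ L)) ≃ₗ[ℝ] (F ⧸ L.comap F.subtype) :=
      aux_equiv F (W ⊔ L) L hFJ (aux_comap F (W ⊔ L) L hinf)
    have etot : (R ⧸ I) ≃ₗ[ℝ] (F ⧸ L.comap F.subtype) :=
      ((Submodule.Quotient.restrictScalarsEquiv ℝ I).symm.trans
        (Submodule.quotEquivOfEq _ _ hIres)).trans e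
    refine ⟨I, hIres, ?_, ?_, ?_, ?_⟩
    · exact Module.Finite.equiv etot.symm
    · rw [etot.finrank_eq, hLcodim]
    · intro x hx
      exact Submodule.mem_sup_left (show x ∈ W from hx)
    · rw [hIres, hinf]
  refine ⟨⟨?_, fun h => by
      obtain ⟨I, _, h2, h3, h4, h5⟩ := key h
      exact ⟨I, h2, h3, h4, h5⟩⟩, key⟩
  rintro ⟨I, hfd, hfr, hmYI, hLeq⟩
  have hWI : W ≤ I.restrictScalars ℝ := fun x hx => hmYI hx
  have h1 : F ⊓ W ≤ L := by
    rw [hLeq]; exact inf_le_inf_left F hWI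
  refine ⟨h1, ?_⟩
  set J : Submodule ℝ R := W ⊔ L with hJdef
  have hLI : L ≤ I.restrictScalars ℝ := hLeq.le.trans inf_le_right
  have hJI : J ≤ I.restrictScalars ℝ := sup_le hWI hLI
  have hFJ : F ⊔ J = ⊤ := by rw [hJdef, ← sup_assoc, hF, top_sup_eq]
  have hinf : F ⊓ J = L := aux_inf F W L hL h1
  have e : (R ⧸ J) ≃ₗ[ℝ] (F ⧸ L.comap F.subtype) :=
    aux_equiv F J L hFJ (aux_comap F J L hinf)
  have hJfd : FiniteDimensional ℝ (R ⧸ J) := Module.Finite.equiv e.symm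
  have hJfr : Module.finrank ℝ (R ⧸ J) = d := by rw [e.finrank_eq, hLcodim]
  have eI : (R ⧸ I.restrictScalars ℝ) ≃ₗ[ℝ] (R ⧸ I) :=
    Submodule.Quotient.restrictScalarsEquiv ℝ I
  have hIfd : FiniteDimensional ℝ (R ⧸ I.restrictScalars ℝ) := Module.Finite.equiv eI.symm
  have hIfr : Module.finrank ℝ (R ⧸ I.restrictScalars ℝ) = d := by rw [eI.finrank_eq, hfr]
  -- the natural surjection R⧸J → R⧸I↓ is injective by dimension count
  have hJc : J ≤ (I.restrictScalars ℝ).comap LinearMap.id := by simpa using hJI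
  set π : (R ⧸ J) →ₗ[ℝ] (R ⧸ I.restrictScalars ℝ) :=
    Submodule.mapQ J (I.restrictScalars ℝ) LinearMap.id hJc with hπdef
  have hπsurj : Function.Surjective π := by
    intro x
    obtain ⟨v, rfl⟩ := Submodule.Quotient.mk_surjective _ x
    exact ⟨Submodule.Quotient.mk v, by simp [hπdef, Submodule.mapQ_apply]⟩
  have hker : LinearMap.ker π = ⊥ := by
    have hrank := LinearMap.finrank_range_add_finrank_ker π
    rw [LinearMap.range_eq_top.mpr hπsurj, finrank_top, hIfr, hJfr] at hrank
    have h0 : Module.finrank ℝ (LinearMap.ker π) = 0 := by omega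
    exact Submodule.finrank_eq_zero.mp h0
  have hIJ : (I.restrictScalars ℝ : Submodule ℝ R) = J := by
    refine le_antisymm ?_ hJI
    intro x hx
    have hx0 : π (Submodule.Quotient.mk x) = 0 := by
      rw [hπdef, Submodule.mapQ_apply]
      simpa [Submodule.Quotient.mk_eq_zero] using hx
    have : (Submodule.Quotient.mk x : R ⧸ J) ∈ LinearMap.ker π := hx0
    rw [hker, Submodule.mem_bot] at this
    exact (Submodule.Quotient.mk_eq_zero J).mp this
  intro p hp g hg
  have hgI : g ∈ I := (hLeq.le.trans inf_le_right) hg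
  have : p * g ∈ I := I.mul_mem_left p hgI
  rw [← hIJ]
  exact this
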